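/- Let r ≥ 1 and let S = ℂ[α_0, α_1, β_0, β_1] be ℤ²-graded with deg α_0 = deg α_1 = (1,0) and deg β_0 = deg β_1 = (0,1) (the Cox ring of ℙ¹×ℙ¹), and let B = (α_0,α_1)·(β_0,β_1) be the irrelevant ideal. Let J = (β_0, α_0^r). Then there exists a homogeneous ideal I ⊆ S such that: dim_ℂ (S/I)_{(a,b)} = min((a+1)(b+1), r) for every (a,b) ∈ ℕ²; I ⊆ J; I_{(a,b)} = J_{(a,b)} for every (a,b) with a ≥ r−1; and (I : B^∞) = J. -/

import Mathlib

open MvPolynomial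

noncomputable section

/-- The saturation `(I : B^∞) = {f ∈ S : f·B^k ⊆ I for some k ≥ 0}`, as a set. -/
def satSet {R : Type*} [CommRing R] (I B : Ideal R) : Set R :=
  {x | ∃ k : ℕ, ∀ g ∈ B ^ k, x * g ∈ I}

/-- The Cox ring `S = ℂ[α_0,α_1,β_0,β_1]` of `ℙ¹×ℙ¹`; the `α`'s are `X (inl _)`,
the `β`'s are `X (inr _)`. -/
abbrev CoxP1P1 : Type := MvPolynomial (Fin 2 ⊕ Fin 2) ℂ

/-- The ℤ²-grading: `deg α_i = (1,0)`, `deg β_j = (0,1)`. -/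
def wP1P1 : Fin 2 ⊕ Fin 2 → ℕ × ℕ := Sum.elim (fun _ => (1, 0)) (fun _ => (0, 1))

/-- The degree-`(a,b)` component `S_{(a,b)}`. -/
def coxPiece (a b : ℕ) : Submodule ℂ CoxP1P1 :=
  weightedHomogeneousSubmodule ℂ wP1P1 (a, b)

/-- The degree-`(a,b)` graded piece `I_{(a,b)} = I ∩ S_{(a,b)}` of an ideal. -/
def idealPiece (I : Ideal CoxP1P1) (a b : ℕ) : Submodule ℂ CoxP1P1 :=
  Submodule.restrictScalars ℂ I ⊓ coxPiece a b

/-- A homogeneous ideal: `I = ⊕_{(a,b)} I_{(a,b)}`. -/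
def IsHomog (I : Ideal CoxP1P1) : Prop :=
  Submodule.restrictScalars ℂ I = ⨆ u : ℕ × ℕ, idealPiece I u.1 u.2

/-- The irrelevant ideal `B = (α_0,α_1)·(β_0,β_1)` of `ℙ¹×ℙ¹`. -/
def irrelP1P1 : Ideal CoxP1P1 :=
  Ideal.span {X (Sum.inl 0), X (Sum.inl 1)} * Ideal.span {X (Sum.inr 0), X (Sum.inr 1)}

-- auxiliary development
open Finsupp Sum

abbrev Exp := (Fin 2 ⊕ Fin 2) →₀ ℕ

lemma weight_eq (d : Exp) :
    Finsupp.weight wP1P1 d = (d (inl 0) + d (inl 1), d (inr 0) + d (inr 1)) := by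
  rw [Finsupp.weight_apply]
  rw [show (Finsupp.sum d fun i c => c • wP1P1 i) = ∑ i, d i • wP1P1 i from
    Finsupp.sum_fintype _ _ (by simp)]
  rw [Fintype.sum_sum_type, Fin.sum_univ_two, Fin.sum_univ_two]
  simp [wP1P1, Prod.ext_iff, Prod.smul_def]

/-- the "standard monomials" (complement of our ideal I) -/
def stdP (r : ℕ) (d : Exp) : Prop :=
  (d (inr 0) = 0 ∧ d (inl 0) < r) ∨
  (1 ≤ d (inr 0) ∧ (d (inl 0) + d (inl 1) + 1) * (d (inr 1) + 1) + d (inl 1) < r)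

lemma stdP_antitone {r : ℕ} {s m : Exp} (h : s ≤ m) (hm : stdP r m) : stdP r s := by
  have h0 := Finsupp.le_def.mp h (inl 0)
  have h1 := Finsupp.le_def.mp h (inl 1)
  have h2 := Finsupp.le_def.mp h (inr 0)
  have h3 := Finsupp.le_def.mp h (inr 1)
  rcases hm with ⟨hz, hi⟩ | ⟨hj, hlt⟩
  · exact Or.inl ⟨by omega, by omega⟩
  · rcases Nat.eq_zero_or_pos (s (inr 0)) with hs | hs
    · refine Or.inl ⟨hs, ?_⟩
      have : m (inl 0) + m (inl 1) + 1 ≤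
          (m (inl 0) + m (inl 1) + 1) * (m (inr 1) + 1) :=
        Nat.le_mul_of_pos_right _ (by omega)
      omega
    · refine Or.inr ⟨hs, ?_⟩
      have : (s (inl 0) + s (inl 1) + 1) * (s (inr 1) + 1) ≤
          (m (inl 0) + m (inl 1) + 1) * (m (inr 1) + 1) :=
        Nat.mul_le_mul (by omega) (by omega)
      omega

/-- our ideal -/
def Istd (r : ℕ) : Ideal CoxP1P1 :=
  Ideal.span ((fun s => monomial s (1 : ℂ)) '' {d | ¬ stdP r d})

lemma mem_Istd {r : ℕ} {f : CoxP1P1} :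
    f ∈ Istd r ↔ ∀ m ∈ f.support, ¬ stdP r m := by
  rw [Istd, mem_ideal_span_monomial_image]
  constructor
  · intro h m hm hstd
    obtain ⟨s, hs, hle⟩ := h m hm
    exact hs (stdP_antitone hle hstd)
  · intro h m hm
    exact ⟨m, h m hm, le_rfl⟩

/-- the ideal J -/
lemma J_eq (r : ℕ) :
    (Ideal.span {X (inr 0), (X (inl 0)) ^ r} : Ideal CoxP1P1) =
      Ideal.span ((fun s => monomial s (1 : ℂ)) ''
        {Finsupp.single (inr 0) 1, Finsupp.single (inl 0) r}) := by
  rw [show ((X (inl 0) : CoxP1P1))^r = monomial (Finsupp.single (inl 0) r) 1 from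
    X_pow_eq_monomial,
    show (X (inr 0) : CoxP1P1) = monomial (Finsupp.single (inr 0) 1) 1 from by rw [X],
    Set.image_pair]

lemma mem_J {r : ℕ} {f : CoxP1P1} :
    f ∈ (Ideal.span {X (inr 0), (X (inl 0)) ^ r} : Ideal CoxP1P1) ↔
      ∀ m ∈ f.support, 1 ≤ m (inr 0) ∨ r ≤ m (inl 0) := by
  rw [J_eq, mem_ideal_span_monomial_image]
  apply forall₂_congr
  intro m _
  constructor
  · rintro ⟨s, hs | hs, hle⟩ <;> subst hs
    · exact Or.inl (by simpa using Finsupp.le_def.mp hle (inr 0))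
    · exact Or.inr (by simpa using Finsupp.le_def.mp hle (inl 0))
  · rintro (h | h)
    · exact ⟨_, Or.inl rfl, by simpa [Finsupp.single_le_iff] using h⟩
    · exact ⟨_, Or.inr rfl, by simpa [Finsupp.single_le_iff] using h⟩

lemma monomial_mem_coxPiece {d : Exp} {c : ℂ} :
    (monomial d c : CoxP1P1) ∈ coxPiece (d (inl 0) + d (inl 1)) (d (inr 0) + d (inr 1)) := by
  rw [coxPiece, mem_weightedHomogeneousSubmodule]
  exact isWeightedHomogeneous_monomial _ _ _ (weight_eq d)

lemma Istd_isHomog (r : ℕ) : IsHomog (Istd r) := by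
  apply le_antisymm
  · intro f hf
    have hf' : f ∈ Istd r := hf
    rw [← support_sum_monomial_coeff f]
    apply Submodule.sum_mem
    intro m hm
    apply Submodule.mem_iSup_of_mem (m (inl 0) + m (inl 1), m (inr 0) + m (inr 1))
    refine ⟨?_, monomial_mem_coxPiece⟩
    show (monomial m (coeff m f) : CoxP1P1) ∈ Istd r
    rw [mem_Istd]
    intro s hs
    classical
    rw [support_monomial] at hs
    have : s = m := by
      by_cases h : coeff m f = 0 <;> simp [h] at hs; exact hs
    exact this ▸ mem_Istd.mp hf' m hm
  · exact iSup_le fun u => inf_le_left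

lemma Istd_le_J (r : ℕ) :
    Istd r ≤ Ideal.span {X (inr 0), (X (inl 0)) ^ r} := by
  rw [Istd, Ideal.span_le]
  rintro _ ⟨d, hd, rfl⟩
  rw [SetLike.mem_coe, mem_J]
  intro m hm
  classical
  rw [support_monomial, if_neg one_ne_zero, Finset.mem_singleton] at hm
  subst hm
  simp only [stdP, Set.mem_setOf_eq, not_or, not_and] at hd
  omega

lemma nonstd_of_highdeg {r a : ℕ} {m : Exp} (ha : r - 1 ≤ a) (hr : 1 ≤ r)
    (hdeg : m (inl 0) + m (inl 1) = a) :
    (¬ stdP r m) ↔ (1 ≤ m (inr 0) ∨ r ≤ m (inl 0)) := by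
  constructor
  · intro h
    simp only [stdP, not_or, not_and] at h
    omega
  · intro h hstd
    rcases hstd with ⟨hz, hi⟩ | ⟨hj, hlt⟩
    · omega
    · have : m (inl 0) + m (inl 1) + 1 ≤
          (m (inl 0) + m (inl 1) + 1) * (m (inr 1) + 1) :=
        Nat.le_mul_of_pos_right _ (by omega)
      omega

lemma mem_coxPiece_iff {a b : ℕ} {f : CoxP1P1} :
    f ∈ coxPiece a b ↔ ∀ m ∈ f.support,
      m (inl 0) + m (inl 1) = a ∧ m (inr 0) + m (inr 1) = b := by
  rw [coxPiece, weightedHomogeneousSubmodule_eq_finsupp_supported, AddMonoidAlgebra.mem_supported]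
  constructor
  · intro h m hm
    have := h hm
    rw [Set.mem_setOf_eq, weight_eq, Prod.ext_iff] at this
    exact this
  · intro h m hm
    show Finsupp.weight wP1P1 m = (a, b)
    rw [weight_eq, Prod.ext_iff]
    exact h m hm

lemma idealPiece_Istd_eq_J (r : ℕ) (hr : 1 ≤ r) (a b : ℕ) (ha : r - 1 ≤ a) :
    idealPiece (Istd r) a b =
      idealPiece (Ideal.span {X (inr 0), (X (inl 0)) ^ r}) a b := by
  ext f
  simp only [idealPiece, Submodule.mem_inf, Submodule.restrictScalars_mem]
  constructor
  · rintro ⟨hI, hcox⟩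
    refine ⟨?_, hcox⟩
    rw [mem_J]
    intro m hm
    exact (nonstd_of_highdeg ha hr ((mem_coxPiece_iff.mp hcox m hm).1)).mp
      (mem_Istd.mp hI m hm)
  · rintro ⟨hJ, hcox⟩
    refine ⟨?_, hcox⟩
    rw [mem_Istd]
    intro m hm
    exact (nonstd_of_highdeg ha hr ((mem_coxPiece_iff.mp hcox m hm).1)).mpr
      (mem_J.mp hJ m hm)

/-- the ideal of polynomials all of whose monomials have α-degree ≥ k and β-degree ≥ k -/
def Qdeg (k : ℕ) : Ideal CoxP1P1 where
  carrier := {f | ∀ m ∈ f.support, k ≤ m (inl 0) + m (inl 1) ∧ k ≤ m (inr 0) + m (inr 1)}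
  add_mem' := by
    classical
    intro p q hp hq m hm
    rcases Finset.mem_union.mp (Finsupp.support_add hm) with h | h
    · exact hp m h
    · exact hq m h
  zero_mem' := by intro m hm; simp at hm
  smul_mem' := by
    classical
    intro c f hf m hm
    rw [smul_eq_mul] at hm
    obtain ⟨m1, hm1, m2, hm2, rfl⟩ := Finset.mem_add.mp (support_mul c f hm)
    have := hf m2 hm2
    simp only [Finsupp.add_apply]
    omega

lemma span_alpha_support {p : CoxP1P1}
    (hp : p ∈ (Ideal.span {X (inl 0), X (inl 1)} : Ideal CoxP1P1)) :
    ∀ m ∈ p.support, 1 ≤ m (inl 0) + m (inl 1) := by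
  have himg : ({X (inl 0), X (inl 1)} : Set CoxP1P1) =
      (fun s => monomial s (1 : ℂ)) '' {Finsupp.single (inl 0) 1, Finsupp.single (inl 1) 1} := by
    rw [Set.image_pair]
    congr 1 <;> rw [X]
  rw [himg, mem_ideal_span_monomial_image] at hp
  intro m hm
  obtain ⟨s, hs | hs, hle⟩ := hp m hm <;> subst hs
  · have := Finsupp.le_def.mp hle (inl 0); simp at this; omega
  · have := Finsupp.le_def.mp hle (inl 1); simp at this; omega

lemma span_beta_support {p : CoxP1P1}
    (hp : p ∈ (Ideal.span {X (inr 0), X (inr 1)} : Ideal CoxP1P1)) :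
    ∀ m ∈ p.support, 1 ≤ m (inr 0) + m (inr 1) := by
  have himg : ({X (inr 0), X (inr 1)} : Set CoxP1P1) =
      (fun s => monomial s (1 : ℂ)) '' {Finsupp.single (inr 0) 1, Finsupp.single (inr 1) 1} := by
    rw [Set.image_pair]
    congr 1 <;> rw [X]
  rw [himg, mem_ideal_span_monomial_image] at hp
  intro m hm
  obtain ⟨s, hs | hs, hle⟩ := hp m hm <;> subst hs
  · have := Finsupp.le_def.mp hle (inr 0); simp at this; omega
  · have := Finsupp.le_def.mp hle (inr 1); simp at this; omega

lemma irrel_le_Qdeg : irrelP1P1 ≤ Qdeg 1 := by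
  rw [irrelP1P1]
  apply Ideal.mul_le.mpr
  intro p hp q hq
  intro m hm
  classical
  obtain ⟨m1, hm1, m2, hm2, rfl⟩ := Finset.mem_add.mp (support_mul p q hm)
  have h1 := span_alpha_support hp m1 hm1
  have h2 := span_beta_support hq m2 hm2
  simp only [Finsupp.add_apply]
  omega

lemma Qdeg_mul (j k : ℕ) : Qdeg j * Qdeg k ≤ Qdeg (j + k) := by
  apply Ideal.mul_le.mpr
  intro p hp q hq m hm
  classical
  obtain ⟨m1, hm1, m2, hm2, rfl⟩ := Finset.mem_add.mp (support_mul p q hm)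
  have h1 := hp m1 hm1
  have h2 := hq m2 hm2
  simp only [Finsupp.add_apply]
  omega

lemma irrel_pow_le_Qdeg (k : ℕ) : irrelP1P1 ^ k ≤ Qdeg k := by
  induction k with
  | zero => intro f _; intro m _; simp
  | succ n ih =>
      calc irrelP1P1 ^ (n + 1) = irrelP1P1 ^ n * irrelP1P1 := by rw [pow_succ]
      _ ≤ Qdeg n * Qdeg 1 := Ideal.mul_mono ih irrel_le_Qdeg
      _ ≤ Qdeg (n + 1) := Qdeg_mul n 1

lemma satSet_Istd (r : ℕ) (hr : 1 ≤ r) :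
    satSet (Istd r) irrelP1P1 =
      ((Ideal.span {X (inr 0), (X (inl 0)) ^ r} : Ideal CoxP1P1) : Set CoxP1P1) := by
  ext f
  constructor
  · rintro ⟨k, hk⟩
    have hαβ : (X (inl 1) * X (inr 1) : CoxP1P1) ∈ irrelP1P1 :=
      Ideal.mul_mem_mul (Ideal.subset_span (by simp)) (Ideal.subset_span (by simp))
    have hg : (X (inl 1) * X (inr 1) : CoxP1P1) ^ k ∈ irrelP1P1 ^ k :=
      Ideal.pow_mem_pow hαβ k
    have hfg := hk _ hg
    have hmon : (X (inl 1) * X (inr 1) : CoxP1P1) ^ k =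
        monomial (Finsupp.single (inl 1) k + Finsupp.single (inr 1) k) 1 := by
      rw [mul_pow, X_pow_eq_monomial, X_pow_eq_monomial, monomial_mul, mul_one]
    rw [hmon] at hfg
    rw [SetLike.mem_coe, mem_J]
    intro m hm
    set e := Finsupp.single (inl 1 : Fin 2 ⊕ Fin 2) k + Finsupp.single (inr 1 : Fin 2 ⊕ Fin 2) k with he
    have hcoeff : coeff (m + e)
        (f * monomial e (1:ℂ)) = coeff m f := by
      rw [coeff_mul_monomial, mul_one]
    have hsupp : m + e ∈ (f * monomial e (1:ℂ)).support := by
      rw [MvPolynomial.mem_support_iff, hcoeff]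
      exact MvPolynomial.mem_support_iff.mp hm
    have hnstd := mem_Istd.mp hfg _ hsupp
    simp only [stdP, not_or, not_and] at hnstd
    have he0 : (m + e) (inr 0) = m (inr 0) := by
      simp [he, Finsupp.single_apply]
    have he1 : (m + e) (inl 0) = m (inl 0) := by
      simp [he, Finsupp.single_apply]
    omega
  · intro hf
    refine ⟨r, fun g hg => ?_⟩
    rw [mem_Istd]
    intro m hm
    classical
    obtain ⟨m1, hm1, m2, hm2, rfl⟩ := Finset.mem_add.mp (support_mul f g hm)
    have h1 := mem_J.mp hf m1 hm1
    have h2 := (irrel_pow_le_Qdeg r hg) m2 hm2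
    intro hstd
    rcases hstd with ⟨hz, hi⟩ | ⟨hj, hlt⟩
    · simp only [Finsupp.add_apply] at hz hi
      omega
    · set M := m1 + m2
      have : M (inl 0) + M (inl 1) + 1 ≤
          (M (inl 0) + M (inl 1) + 1) * (M (inr 1) + 1) :=
        Nat.le_mul_of_pos_right _ (by omega)
      have hM : M (inl 0) + M (inl 1) = m1 (inl 0) + m2 (inl 0) + (m1 (inl 1) + m2 (inl 1)) := by
        simp only [M, Finsupp.add_apply]
      omega

-- arithmetic helpers
lemma aux_lt_iff {a x b u : ℕ} (hu : u ≤ a) : (a+1)*x + u < (a+1)*b ↔ x < b := by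
  constructor
  · intro h
    by_contra h'
    push_neg at h'
    have := Nat.mul_le_mul_left (a+1) h'
    omega
  · intro h
    have : (a+1)*(x+1) ≤ (a+1)*b := Nat.mul_le_mul_left (a+1) h
    have hx : (a+1)*(x+1) = (a+1)*x + (a+1) := by ring
    omega

lemma aux_le_iff {a x b u : ℕ} (hu : u ≤ a) : (a+1)*b ≤ (a+1)*x + u ↔ b ≤ x := by
  rw [← not_lt, ← not_lt, aux_lt_iff hu]

-- grid and pair encoding
def grid (a b : ℕ) : Finset (ℕ × ℕ) := Finset.range (a+1) ×ˢ Finset.range (b+1)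

lemma mem_grid {a b : ℕ} {p : ℕ × ℕ} : p ∈ grid a b ↔ p.1 ≤ a ∧ p.2 ≤ b := by
  simp [grid, Finset.mem_product, Nat.lt_succ_iff]

def ofPair (a b : ℕ) (p : ℕ × ℕ) : Exp :=
  Finsupp.single (inl 0) p.1 + Finsupp.single (inl 1) (a - p.1) +
  Finsupp.single (inr 0) p.2 + Finsupp.single (inr 1) (b - p.2)

lemma ofPair_inl0 (a b : ℕ) (p : ℕ × ℕ) : ofPair a b p (inl 0) = p.1 := by
  simp [ofPair, Finsupp.single_apply]
lemma ofPair_inl1 (a b : ℕ) (p : ℕ × ℕ) : ofPair a b p (inl 1) = a - p.1 := by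
  simp [ofPair, Finsupp.single_apply]
lemma ofPair_inr0 (a b : ℕ) (p : ℕ × ℕ) : ofPair a b p (inr 0) = p.2 := by
  simp [ofPair, Finsupp.single_apply]
lemma ofPair_inr1 (a b : ℕ) (p : ℕ × ℕ) : ofPair a b p (inr 1) = b - p.2 := by
  simp [ofPair, Finsupp.single_apply]

lemma weight_ofPair {a b : ℕ} {p : ℕ × ℕ} (h1 : p.1 ≤ a) (h2 : p.2 ≤ b) :
    Finsupp.weight wP1P1 (ofPair a b p) = (a, b) := by
  rw [weight_eq, ofPair_inl0, ofPair_inl1, ofPair_inr0, ofPair_inr1, Prod.ext_iff]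
  constructor <;> simp <;> omega

open scoped Classical

lemma ofPair_self {a b : ℕ} {d : Exp} (hd : Finsupp.weight wP1P1 d = (a, b)) :
    ofPair a b (d (inl 0), d (inr 0)) = d := by
  rw [weight_eq] at hd
  have h1 : d (inl 0) + d (inl 1) = a := congrArg Prod.fst hd
  have h2 : d (inr 0) + d (inr 1) = b := congrArg Prod.snd hd
  ext x
  rcases x with x | x <;> fin_cases x <;>
    simp [ofPair, Finsupp.single_apply] <;> omega

lemma finrank_supported (a b : ℕ) (Q : Exp → Prop)
    [DecidablePred fun p => Q (ofPair a b p)] :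
    Module.finrank ℂ
      (AddMonoidAlgebra.supported ℂ ℂ {d : Exp | Finsupp.weight wP1P1 d = (a, b) ∧ Q d}) =
      ((grid a b).filter (fun p => Q (ofPair a b p))).card := by
  set s : Set Exp := {d : Exp | Finsupp.weight wP1P1 d = (a, b) ∧ Q d} with hs
  have e : s ≃ {p // p ∈ (grid a b).filter (fun p => Q (ofPair a b p))} := by
    refine ⟨fun d => ⟨(d.1 (inl 0), d.1 (inr 0)), ?_⟩, fun p => ⟨ofPair a b p.1, ?_⟩, ?_, ?_⟩
    · obtain ⟨d, hd, hQ⟩ := d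
      have hw := hd
      rw [weight_eq, Prod.ext_iff] at hw
      rw [Finset.mem_filter, mem_grid]
      refine ⟨⟨by simp; omega, by simp; omega⟩, ?_⟩
      rw [ofPair_self hd]
      exact hQ
    · obtain ⟨p, hp⟩ := p
      rw [Finset.mem_filter, mem_grid] at hp
      exact ⟨weight_ofPair hp.1.1 hp.1.2, hp.2⟩
    · rintro ⟨d, hd, hQ⟩
      exact Subtype.ext (ofPair_self hd)
    · rintro ⟨p, hp⟩
      apply Subtype.ext
      show (ofPair a b p (inl 0), ofPair a b p (inr 0)) = p
      rw [ofPair_inl0, ofPair_inr0]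
  letI : Fintype s := Fintype.ofEquiv _ e.symm
  rw [LinearEquiv.finrank_eq (AddMonoidAlgebra.supportedEquivFinsupp (R := ℂ) (S := ℂ) s)]
  rw [Module.finrank_finsupp_self, Fintype.card_congr e, Fintype.card_coe]

lemma finrank_coxPiece (a b : ℕ) :
    Module.finrank ℂ (coxPiece a b) = (a + 1) * (b + 1) := by
  have : coxPiece a b =
      AddMonoidAlgebra.supported ℂ ℂ {d : Exp | Finsupp.weight wP1P1 d = (a, b) ∧ True} := by
    rw [coxPiece, weightedHomogeneousSubmodule_eq_finsupp_supported]
    simp only [and_true]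
  rw [this]
  have h : Module.finrank ℂ
      (AddMonoidAlgebra.supported ℂ ℂ {d : Exp | Finsupp.weight wP1P1 d = (a, b) ∧ True}) =
      ((grid a b).filter (fun p => True)).card := finrank_supported a b (fun _ => True)
  refine h.trans ?_
  rw [Finset.filter_true_of_mem (by intro p _; trivial)]
  simp [grid]

lemma idealPiece_Istd_eq (r a b : ℕ) :
    idealPiece (Istd r) a b =
      AddMonoidAlgebra.supported ℂ ℂ
        {d : Exp | Finsupp.weight wP1P1 d = (a, b) ∧ ¬ stdP r d} := by
  ext f
  simp only [idealPiece, Submodule.mem_inf, Submodule.restrictScalars_mem,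
    AddMonoidAlgebra.mem_supported]
  constructor
  · rintro ⟨hI, hcox⟩
    intro m hm
    have hm' : m ∈ f.support := hm
    refine ⟨?_, mem_Istd.mp hI m hm'⟩
    have := mem_coxPiece_iff.mp hcox m hm'
    rw [weight_eq, Prod.ext_iff]
    exact this
  · intro h
    constructor
    · rw [mem_Istd]
      intro m hm
      exact (h hm).2
    · rw [mem_coxPiece_iff]
      intro m hm
      have := (h hm).1
      rw [weight_eq, Prod.ext_iff] at this
      exact this

lemma finrank_idealPiece (r a b : ℕ) :
    Module.finrank ℂ (idealPiece (Istd r) a b) =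
      ((grid a b).filter (fun p => ¬ stdP r (ofPair a b p))).card := by
  rw [idealPiece_Istd_eq]
  exact finrank_supported a b (fun d => ¬ stdP r d)

lemma stdP_ofPair {r a b : ℕ} {p : ℕ × ℕ} (h1 : p.1 ≤ a) :
    stdP r (ofPair a b p) ↔
      (p.2 = 0 ∧ p.1 < r) ∨
      (1 ≤ p.2 ∧ (a + 1) * (b - p.2 + 1) + (a - p.1) < r) := by
  unfold stdP
  rw [ofPair_inl0, ofPair_inl1, ofPair_inr0, ofPair_inr1]
  have h : p.1 + (a - p.1) + 1 = a + 1 := by omega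
  rw [h]

lemma card_interval (a r M N : ℕ) (hNM : N = M + (a + 1)) (hr : 1 ≤ r) :
    ((Finset.range N).filter
      (fun t => (M ≤ t ∧ N ≤ t + r) ∨ (t < M ∧ t + (a + 1) < r))).card = min N r := by
  rw [Finset.filter_or, Finset.card_union_of_disjoint]
  · have e1 : (Finset.range N).filter (fun t => M ≤ t ∧ N ≤ t + r) =
        Finset.Ico (max M (N - r)) N := by
      ext t
      simp only [Finset.mem_filter, Finset.mem_range, Finset.mem_Ico]
      omega
    have e2 : (Finset.range N).filter (fun t => t < M ∧ t + (a + 1) < r) =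
        Finset.range (min M (r - (a + 1))) := by
      ext t
      simp only [Finset.mem_filter, Finset.mem_range]
      omega
    rw [e1, e2, Nat.card_Ico, Finset.card_range]
    omega
  · rw [Finset.disjoint_left]
    intro t ht ht'
    simp only [Finset.mem_filter] at ht ht'
    omega

lemma card_std_filter (r a b : ℕ) (hr : 1 ≤ r) :
    ((grid a b).filter (fun p => stdP r (ofPair a b p))).card = min ((a + 1) * (b + 1)) r := by
  have key : ((grid a b).filter (fun p => stdP r (ofPair a b p))).card =
      ((Finset.range ((a + 1) * (b + 1))).filter
        (fun t => ((a + 1) * b ≤ t ∧ (a + 1) * (b + 1) ≤ t + r) ∨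
          (t < (a + 1) * b ∧ t + (a + 1) < r))).card := by
    apply Finset.card_nbij' (i := fun p => (a + 1) * (b - p.2) + (a - p.1))
      (j := fun t => (a - t % (a + 1), b - t / (a + 1)))
    · -- forward map lands in target
      intro p hp
      rw [Finset.mem_coe, Finset.mem_filter, mem_grid] at hp
      obtain ⟨⟨h1, h2⟩, hstd⟩ := hp
      rw [stdP_ofPair h1] at hstd
      have hNN : (a + 1) * (b + 1) = (a + 1) * b + (a + 1) := by ring
      have hlt : (a + 1) * (b - p.2) + (a - p.1) < (a + 1) * (b + 1) := by
        rw [aux_lt_iff (by omega)]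
        omega
      rw [Finset.mem_coe, Finset.mem_filter, Finset.mem_range]
      beta_reduce
      refine ⟨hlt, ?_⟩
      rcases hstd with ⟨hz, hi⟩ | ⟨hj, hlt2⟩
      · left
        have hb0 : b - p.2 = b := by omega
        rw [hb0]
        omega
      · right
        have hmm : (a + 1) * (b - p.2 + 1) = (a + 1) * (b - p.2) + (a + 1) := by ring
        constructor
        · rw [aux_lt_iff (by omega)]; omega
        · omega
    · -- backward map lands in source
      intro t ht
      rw [Finset.mem_coe, Finset.mem_filter, Finset.mem_range] at ht
      obtain ⟨htN, hT⟩ := ht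
      have hNN : (a + 1) * (b + 1) = (a + 1) * b + (a + 1) := by ring
      have hmod : t % (a + 1) ≤ a := by
        have := Nat.mod_lt t (show 0 < a + 1 by omega); omega
      have hdm := Nat.div_add_mod t (a + 1)
      have hdiv : t / (a + 1) ≤ b := by
        by_contra h
        push_neg at h
        have : (a + 1) * (b + 1) ≤ (a + 1) * (t / (a + 1)) :=
          Nat.mul_le_mul_left _ (by omega)
        omega
      have hqle : (a + 1) * b ≤ t ↔ b ≤ t / (a + 1) := by
        rw [← aux_le_iff (x := t / (a + 1)) (u := t % (a + 1)) hmod]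
        omega
      have hqlt : t < (a + 1) * b ↔ t / (a + 1) < b := by
        rw [← aux_lt_iff (x := t / (a + 1)) (u := t % (a + 1)) hmod]
        omega
      rw [Finset.mem_coe, Finset.mem_filter, mem_grid]
      refine ⟨⟨by simp, by simp⟩, ?_⟩
      rw [stdP_ofPair (by simp)]
      simp only
      generalize hq : t / (a + 1) = q at hdm hdiv hqle hqlt
      generalize hu : t % (a + 1) = u at hdm hmod
      rcases hT with ⟨hM, hN⟩ | ⟨hM, hs⟩
      · left
        have hb : b ≤ q := hqle.mp hM
        have hxb : q = b := by omega
        subst hxb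
        constructor
        · omega
        · omega
      · right
        have hb : q < b := hqlt.mp hM
        refine ⟨by omega, ?_⟩
        have h1 : b - (b - q) = q := by omega
        have h2 : a - (a - u) = u := by omega
        rw [h1, h2]
        have hmm : (a + 1) * (q + 1) = (a + 1) * q + (a + 1) := by ring
        omega
    · -- left inverse
      intro p hp
      rw [Finset.mem_coe, Finset.mem_filter, mem_grid] at hp
      obtain ⟨⟨h1, h2⟩, _⟩ := hp
      have hmod : ((a + 1) * (b - p.2) + (a - p.1)) % (a + 1) = a - p.1 := by
        rw [Nat.mul_add_mod]
        exact Nat.mod_eq_of_lt (by omega)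
      have hdiv : ((a + 1) * (b - p.2) + (a - p.1)) / (a + 1) = b - p.2 := by
        rw [Nat.mul_add_div (by omega)]
        have : (a - p.1) / (a + 1) = 0 := Nat.div_eq_of_lt (by omega)
        omega
      beta_reduce
      rw [hmod, hdiv]
      apply Prod.ext <;> simp <;> omega
    · -- right inverse
      intro t ht
      rw [Finset.mem_coe, Finset.mem_filter, Finset.mem_range] at ht
      obtain ⟨htN, _⟩ := ht
      have hNN : (a + 1) * (b + 1) = (a + 1) * b + (a + 1) := by ring
      have hmod : t % (a + 1) ≤ a := by
        have := Nat.mod_lt t (show 0 < a + 1 by omega); omega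
      have hdm := Nat.div_add_mod t (a + 1)
      have hdiv : t / (a + 1) ≤ b := by
        by_contra h
        push_neg at h
        have : (a + 1) * (b + 1) ≤ (a + 1) * (t / (a + 1)) :=
          Nat.mul_le_mul_left _ (by omega)
        omega
      simp only
      generalize hq : t / (a + 1) = q at hdm hdiv
      generalize hu : t % (a + 1) = u at hdm hmod
      have h1 : b - (b - q) = q := by omega
      have h2 : a - (a - u) = u := by omega
      rw [h1, h2]
      omega
  rw [key, card_interval a r ((a + 1) * b) ((a + 1) * (b + 1)) (by ring) hr]

lemma hilbert_Istd (r a b : ℕ) (hr : 1 ≤ r) :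
    Module.finrank ℂ (coxPiece a b) - Module.finrank ℂ (idealPiece (Istd r) a b) =
      min ((a + 1) * (b + 1)) r := by
  rw [finrank_coxPiece, finrank_idealPiece]
  have hsum := Finset.card_filter_add_card_filter_not
    (s := grid a b) (p := fun p => stdP r (ofPair a b p))
  have hstd := card_std_filter r a b hr
  have hgrid : (grid a b).card = (a + 1) * (b + 1) := by simp [grid]
  have hmin : min ((a + 1) * (b + 1)) r ≤ (a + 1) * (b + 1) := min_le_left _ _
  omega


/-- For every `r ≥ 1` there is a homogeneous ideal `I` with Hilbert function
`min((a+1)(b+1), r)`, contained in `J = (β_0, α_0^r)`, agreeing with `J` in all degrees `(a,b)`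
with `a ≥ r−1`, and with saturation `J`. -/
theorem exists_ideal_with_saturation_J (r : ℕ) (hr : 1 ≤ r) :
    ∃ I : Ideal CoxP1P1,
      IsHomog I ∧
      (∀ a b : ℕ,
        Module.finrank ℂ ↥(coxPiece a b) - Module.finrank ℂ ↥(idealPiece I a b) =
          min ((a + 1) * (b + 1)) r) ∧
      I ≤ Ideal.span {X (Sum.inr 0), (X (Sum.inl 0))^r} ∧
      (∀ a b : ℕ, r - 1 ≤ a →
        idealPiece I a b = idealPiece (Ideal.span {X (Sum.inr 0), (X (Sum.inl 0))^r}) a b) ∧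
      satSet I irrelP1P1 =
        ((Ideal.span {X (Sum.inr 0), (X (Sum.inl 0))^r} : Ideal CoxP1P1) : Set CoxP1P1) :=
  ⟨Istd r, Istd_isHomog r, fun a b => hilbert_Istd r a b hr, Istd_le_J r,
    idealPiece_Istd_eq_J r hr, satSet_Istd r hr⟩
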